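/- For natural numbers i ≠ j, the tree encodings T(i) and T(j) are non-isomorphic (as rooted trees). -/

import Mathlib

/-- Rooted trees: a root with a list of subtrees. -/
inductive RTree where
  | node : List RTree → RTree

/-- bit(j,i) = 0 if ⌊i/2^j⌋ is even, and 1 otherwise. -/
def bit (j i : ℕ) : ℕ := if (i / 2 ^ j) % 2 = 0 then 0 else 1

/-- The tree encoding T(i): T(0) is the one-node tree; T(i) has subtrees
exactly the T(j) for those j with bit(j,i) = 1. -/
def Tenc (n : ℕ) : RTree :=
  .node (((List.range n).filter (fun j => bit j n = 1)).attach.map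
    (fun ⟨j, hj⟩ => Tenc j))
termination_by n
decreasing_by
  simp only [List.mem_filter, List.mem_range] at hj
  exact hj.1

mutual
/-- Rooted-tree isomorphism: two trees are isomorphic iff the lists of subtrees
match up to a permutation, via pairwise isomorphisms. -/
def TIso : RTree → RTree → Prop
  | .node cs, .node ds => ∃ ds', ds.Perm ds' ∧ TIsoList cs ds'
/-- Pairwise isomorphism of two lists of trees. -/
def TIsoList : List RTree → List RTree → Prop
  | [], [] => True
  | c :: cs, d :: ds => TIso c d ∧ TIsoList cs ds
  | _, _ => False
end

/-- The list of children indices of `Tenc n`. -/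
def Lbits (n : ℕ) : List ℕ := (List.range n).filter (fun j => bit j n = 1)

lemma Tenc_eq (n : ℕ) : Tenc n = .node ((Lbits n).map Tenc) := by
  rw [Tenc]
  congr 1
  rw [Lbits, List.map_attach_eq_pmap]
  simp [List.pmap_eq_map]

lemma mem_Lbits (a n : ℕ) : a ∈ Lbits n ↔ n.testBit a := by
  simp only [Lbits, List.mem_filter, List.mem_range, bit, Nat.testBit_eq_decide_div_mod_eq,
    decide_eq_true_eq]
  constructor
  · rintro ⟨h1, h2⟩
    split at h2 <;> simp at h2 <;> omega
  · intro h
    refine ⟨?_, by split <;> simp <;> omega⟩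
    by_contra hle
    push_neg at hle
    have : n < 2 ^ a := lt_of_lt_of_le (Nat.lt_two_pow_self (n := n)) (Nat.pow_le_pow_right (by norm_num) hle)
    have := Nat.div_eq_of_lt this
    omega

lemma TIsoList_mem : ∀ cs ds : List RTree, TIsoList cs ds →
    (∀ c ∈ cs, ∃ d ∈ ds, TIso c d) ∧ (∀ d ∈ ds, ∃ c ∈ cs, TIso c d) := by
  intro cs
  induction cs with
  | nil => intro ds h
           cases ds with
           | nil => simp
           | cons d ds => exact absurd h (by simp [TIsoList])
  | cons c cs ih =>
    intro ds h
    cases ds with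
    | nil => exact absurd h (by simp [TIsoList])
    | cons d ds =>
      rw [TIsoList] at h
      obtain ⟨h1, h2⟩ := h
      obtain ⟨ih1, ih2⟩ := ih ds h2
      constructor
      · intro x hx
        rcases List.mem_cons.mp hx with rfl | hx
        · exact ⟨d, by simp, h1⟩
        · obtain ⟨y, hy, hxy⟩ := ih1 x hx
          exact ⟨y, by simp [hy], hxy⟩
      · intro y hy
        rcases List.mem_cons.mp hy with rfl | hy
        · exact ⟨c, by simp, h1⟩
        · obtain ⟨x, hx, hxy⟩ := ih2 y hy
          exact ⟨x, by simp [hx], hxy⟩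

lemma Tenc_iso_eq : ∀ N, ∀ i j : ℕ, i + j ≤ N → TIso (Tenc i) (Tenc j) → i = j := by
  intro N
  induction N with
  | zero => intro i j h _; omega
  | succ N ih =>
    intro i j hN hiso
    rw [Tenc_eq i, Tenc_eq j, TIso] at hiso
    obtain ⟨ds', hperm, hlist⟩ := hiso
    obtain ⟨haux1, haux2⟩ := TIsoList_mem _ _ hlist
    apply Nat.eq_of_testBit_eq
    intro a
    rw [← Bool.coe_iff_coe, ← mem_Lbits, ← mem_Lbits]
    constructor
    · intro ha
      have hai : a < i := by
        have := (List.mem_filter.mp ha).1; simpa [List.mem_range] using this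
      obtain ⟨d, hd, hiso'⟩ := haux1 (Tenc a) (List.mem_map_of_mem (f := Tenc) ha)
      have hd' : d ∈ (Lbits j).map Tenc := hperm.mem_iff.mpr hd
      obtain ⟨b, hb, rfl⟩ := List.mem_map.mp hd'
      have hbj : b < j := by
        have := (List.mem_filter.mp hb).1; simpa [List.mem_range] using this
      have : a = b := ih a b (by omega) hiso'
      exact this ▸ hb
    · intro hb
      have hbj : a < j := by
        have := (List.mem_filter.mp hb).1; simpa [List.mem_range] using this
      have : Tenc a ∈ ds' := hperm.mem_iff.mp (List.mem_map_of_mem (f := Tenc) hb)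
      obtain ⟨c, hc, hiso'⟩ := haux2 (Tenc a) this
      obtain ⟨b, hbmem, rfl⟩ := List.mem_map.mp hc
      have hbi : b < i := by
        have := (List.mem_filter.mp hbmem).1; simpa [List.mem_range] using this
      have : b = a := ih b a (by omega) hiso'
      exact this ▸ hbmem

/-- Distinct natural numbers have non-isomorphic tree encodings. -/
theorem Tenc_not_iso (i j : ℕ) (hij : i ≠ j) : ¬ TIso (Tenc i) (Tenc j) := by
  intro h
  exact hij (Tenc_iso_eq (i + j) i j le_rfl h)
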